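/- arXiv:1903.02991 — 4 statements merged into one kernel-verified Lean document; each statement's English description precedes it below -/
import Mathlib

section
/- Let L and K be small categories with finite products. For a finite-product-preserving functor f : L ⥤ K, precomposition with f sends models of K to models of L, giving a functor f* : Mdl(K) ⥤ Mdl(L); and the resulting functor Fun^×(L, K) ⥤ Fun(Mdl(K), Mdl(L)), f ↦ f*, is fully faithful: for finite-product-preserving f, g : L ⥤ K, the canonical map from natural transformations f → g to natural transformations f* → g* is a bijection. -/
open CategoryTheory CategoryTheory.Limits Opposite

universe u

/-- The category of models of `L`: the full subcategory of `Fun(L, Type u)` spanned by the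
finite-product-preserving functors. -/
abbrev Mdl (L : Type u) [SmallCategory L] : Type (u + 1) :=
  ObjectProperty.FullSubcategory (fun F : L ⥤ Type u => PreservesFiniteProducts F)

variable {L K : Type u} [SmallCategory L] [SmallCategory K]

/-- Precomposition with a finite-product-preserving functor `f : L ⥤ K` sends models of `K`
to models of `L`, giving a functor `f* : Mdl K ⥤ Mdl L`. -/
def preMdl (f : L ⥤ K) [PreservesFiniteProducts f] : Mdl K ⥤ Mdl L :=
  ObjectProperty.lift _
    (ObjectProperty.ι _ ⋙ (Functor.whiskeringLeft L K (Type u)).obj f)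
    (fun F => by
      have : PreservesFiniteProducts F.obj := F.property
      dsimp
      infer_instance)

/-- The canonical map from natural transformations `f ⟶ g` to natural transformations
`f* ⟶ g*`, given objectwise by whiskering. -/
def preMdlMap {f g : L ⥤ K} [PreservesFiniteProducts f] [PreservesFiniteProducts g]
    (α : f ⟶ g) : preMdl f ⟶ preMdl g where
  app F := ObjectProperty.homMk (Functor.whiskerRight α F.obj)
  naturality _ _ φ := ObjectProperty.hom_ext _
    (((Functor.whiskeringLeft L K (Type u)).map α).naturality φ.hom)

/-- Representable (coyoneda) models. -/
noncomputable def coyMdl (k : K) : Mdl K :=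
  ⟨coyoneda.obj (op k), ⟨fun _ => inferInstance⟩⟩

/-- The assignment `f ↦ f*` is fully faithful: for finite-product-preserving functors
`f, g : L ⥤ K`, the canonical map from natural transformations `f ⟶ g` to natural
transformations `f* ⟶ g*` is a bijection. -/
theorem preMdl_fullyFaithful (f g : L ⥤ K)
    [PreservesFiniteProducts f] [PreservesFiniteProducts g] :
    Function.Bijective (preMdlMap : (f ⟶ g) → (preMdl f ⟶ preMdl g)) := by
  constructor
  · intro α β h
    ext l
    have := types_congr_hom (NatTrans.congr_app
      (congr_arg InducedCategory.Hom.hom (NatTrans.congr_app h (coyMdl (f.obj l)))) l) (𝟙 (f.obj l))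
    have this' : 𝟙 (f.obj l) ≫ α.app l = 𝟙 (f.obj l) ≫ β.app l := this
    simpa [preMdlMap, preMdl, coyMdl] using this'
  · intro Φ
    let a : ∀ l, f.obj l ⟶ g.obj l :=
      fun l => (Φ.app (coyMdl (f.obj l))).hom.app l (𝟙 (f.obj l))
    have key : ∀ (k : K) (l : L) (u : k ⟶ f.obj l),
        (Φ.app (coyMdl k)).hom.app l u = u ≫ a l := by
      intro k l u
      let φ : coyMdl (f.obj l) ⟶ coyMdl k := ObjectProperty.homMk (coyoneda.map u.op)
      have h : (Φ.app (coyMdl k)).hom.app l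
            ((Functor.whiskerLeft f (coyoneda.map u.op)).app l (𝟙 (f.obj l)))
          = (Functor.whiskerLeft g (coyoneda.map u.op)).app l
            ((Φ.app (coyMdl (f.obj l))).hom.app l (𝟙 (f.obj l))) :=
        types_congr_hom (NatTrans.congr_app (congr_arg InducedCategory.Hom.hom (Φ.naturality φ)) l) (𝟙 (f.obj l))
      simpa [a] using h
    let α : f ⟶ g :=
      { app := a
        naturality := by
          intro l l' m
          have h1 := types_congr_hom ((Φ.app (coyMdl (f.obj l))).hom.naturality m) (𝟙 (f.obj l))
          have h2 := key (f.obj l) l' (f.map m)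
          have h1' : (Φ.app (coyMdl (f.obj l))).hom.app l' (f.map m) = a l ≫ g.map m := by
            have h1'' : (Φ.app (coyMdl (f.obj l))).hom.app l' (𝟙 (f.obj l) ≫ f.map m)
                = (Φ.app (coyMdl (f.obj l))).hom.app l (𝟙 (f.obj l)) ≫ g.map m := h1
            simpa [preMdl, coyMdl, a] using h1''
          exact h2.symm.trans h1' }
    refine ⟨α, ?_⟩
    apply NatTrans.ext
    funext F
    apply ObjectProperty.hom_ext
    apply NatTrans.ext
    funext l
    ext x
    let ψ : coyMdl (f.obj l) ⟶ F := ObjectProperty.homMk (coyonedaEquiv.symm x)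
    have h : (Φ.app F).hom.app l
          ((Functor.whiskerLeft f (ψ.hom : coyoneda.obj (op (f.obj l)) ⟶ F.obj)).app l (𝟙 (f.obj l)))
        = (Functor.whiskerLeft g (ψ.hom : coyoneda.obj (op (f.obj l)) ⟶ F.obj)).app l
          ((Φ.app (coyMdl (f.obj l))).hom.app l (𝟙 (f.obj l))) :=
      types_congr_hom (NatTrans.congr_app (congr_arg InducedCategory.Hom.hom (Φ.naturality ψ)) l) (𝟙 (f.obj l))
    have hx : (ψ.hom : coyoneda.obj (op (f.obj l)) ⟶ F.obj).app (f.obj l) (𝟙 _) = x :=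
      (coyonedaEquiv_apply ψ.hom).symm.trans ((@coyonedaEquiv K _ (f.obj l) F.obj).apply_symm_apply x)
    have hmap : (ψ.hom : coyoneda.obj (op (f.obj l)) ⟶ F.obj).app (g.obj l) (a l)
        = F.obj.map (a l) x := by
      rw [← hx]; exact (map_coyonedaEquiv ψ.hom (a l)).symm
    show F.obj.map (α.app l) x = (Φ.app F).hom.app l x
    simp only [Functor.whiskerLeft_app, hx] at h
    rw [h]
    exact hmap.symm
end

section
/- Let R be a ring and let F denote the full subcategory of ModuleCat R spanned by the finitely generated free modules Fin n → R (for n : ℕ). Then the restricted Yoneda functor ModuleCat R ⥤ Fun(Fᵒᵖ, Type), sending a module M to the functor N ↦ (R-linear maps N → M), is fully faithful, and its essential image consists exactly of the functors Fᵒᵖ ⥤ Type that preserve finite products (equivalently, that send finite direct sums in F to products of sets). In particular ModuleCat R is equivalent to the category of models of the Lawvere theory Fᵒᵖ. -/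
open CategoryTheory CategoryTheory.Limits Opposite

universe u

variable (R : Type u) [Ring R]

/-- Finitely generated free `R`-modules: those isomorphic to `Fin n → R` for some `n`. -/
def IsFGFree (M : ModuleCat.{u} R) : Prop :=
  ∃ n : ℕ, Nonempty (M ≅ ModuleCat.of R (Fin n → R))

/-- The full subcategory of `ModuleCat R` spanned by the finitely generated free modules. -/
abbrev FGFree : Type (u + 1) := ObjectProperty.FullSubcategory (IsFGFree R)

/-- The restricted Yoneda functor, sending an `R`-module `M` to the functor
`N ↦ (R-linear maps N → M)` on the opposite of the category of finitely generated free
modules. -/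
def restrictedYoneda : ModuleCat.{u} R ⥤ ((FGFree R)ᵒᵖ ⥤ Type u) :=
  yoneda ⋙ (Functor.whiskeringLeft (FGFree R)ᵒᵖ (ModuleCat.{u} R)ᵒᵖ (Type u)).obj
    (ObjectProperty.ι (IsFGFree R)).op


namespace Test

/-- bijectivity of the projections map for a limit cone over a discrete diagram in Type. -/
lemma discrete_cone_bij {J : Type} {K : Discrete J ⥤ Type u} {c : Cone K} (hc : IsLimit c) :
    Function.Bijective (fun (x : c.pt) (j : J) => c.π.app ⟨j⟩ x) := by
  constructor
  · intro x y hxy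
    have : (TypeCat.ofHom (fun _ : PUnit.{u+1} => x) : PUnit.{u+1} ⟶ c.pt) = TypeCat.ofHom (fun _ => y) := by
      apply hc.hom_ext
      rintro ⟨j⟩
      refine ConcreteCategory.hom_ext _ _ (fun t => ?_)
      exact congrFun hxy j
    exact types_congr_hom this PUnit.unit
  · intro v
    let s : Cone K := ⟨PUnit.{u+1}, Discrete.natTrans (fun j => TypeCat.ofHom (fun _ => v j.as))⟩
    refine ⟨hc.lift s PUnit.unit, ?_⟩
    funext j
    exact types_congr_hom (hc.fac s ⟨j⟩) PUnit.unit

abbrev Aob : FGFree R := ⟨ModuleCat.of R R, 1, ⟨(LinearEquiv.funUnique (Fin 1) R R).symm.toModuleIso⟩⟩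
abbrev Bob (n : ℕ) : FGFree R := ⟨ModuleCat.of R (Fin n → R), n, ⟨Iso.refl _⟩⟩

instance : Preadditive (FGFree R) := Preadditive.fullSubcategory _

variable {R}
def toLin {N N' : FGFree R} (f : N ⟶ N') : (↑N.obj →ₗ[R] ↑N'.obj) := f.hom.hom
def ofLin {N N' : FGFree R} (f : ↑N.obj →ₗ[R] ↑N'.obj) : N ⟶ N' :=
  InducedCategory.homMk (ModuleCat.ofHom f)
lemma toLin_comp {N N' N'' : FGFree R} (f : N ⟶ N') (g : N' ⟶ N'') :
    toLin (f ≫ g) = (toLin g).comp (toLin f) := rfl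
lemma toLin_add {N N' : FGFree R} (f g : N ⟶ N') : toLin (f + g) = toLin f + toLin g := rfl
lemma toLin_neg {N N' : FGFree R} (f : N ⟶ N') : toLin (-f) = -(toLin f) := rfl
lemma toLin_zero {N N' : FGFree R} : toLin (0 : N ⟶ N') = 0 := rfl
lemma hom_eq_of_toLin {N N' : FGFree R} {f g : N ⟶ N'} (h : toLin f = toLin g) : f = g :=
  InducedCategory.hom_ext (ModuleCat.hom_ext h)
variable (R)

noncomputable def sing (n : ℕ) (i : Fin n) : Aob R ⟶ Bob R n :=
  ofLin (LinearMap.single R (fun _ : Fin n => R) i)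
def toSpanF {N : FGFree R} (v : N.obj) : Aob R ⟶ N :=
  ofLin (LinearMap.toSpanSingleton R N.obj v)
noncomputable def sumM {n : ℕ} {N : FGFree R} (f : Fin n → (Aob R ⟶ N)) : Bob R n ⟶ N :=
  ofLin (∑ i, (toLin (f i)).comp (LinearMap.proj i))

lemma sing_comp_sumM {n : ℕ} {N : FGFree R} (f : Fin n → (Aob R ⟶ N)) (i : Fin n) :
    sing R n i ≫ sumM R f = f i := by
  apply hom_eq_of_toLin
  rw [toLin_comp]
  apply LinearMap.ext
  intro r
  show (∑ j, (toLin (f j)).comp (LinearMap.proj j)) (Pi.single i r) = toLin (f i) r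
  rw [LinearMap.sum_apply]
  simp only [LinearMap.comp_apply, LinearMap.proj_apply, Pi.single_apply]
  rw [Finset.sum_eq_single i (fun b _ hb => by simp [hb]) (by simp)]
  simp

lemma toSpanF_comp {N N' : FGFree R} (v : N.obj) (h : N ⟶ N') :
    toSpanF R v ≫ h = toSpanF R (toLin h v) := by
  apply hom_eq_of_toLin
  rw [toLin_comp]
  apply LinearMap.ext
  intro r
  show toLin h (r • v) = r • toLin h v
  rw [map_smul]

/-- The fan exhibiting `Bob n` as the `n`-fold power of `Aob` in `(FGFree R)ᵒᵖ`. -/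
noncomputable def powerFan (n : ℕ) : Fan (fun _ : Fin n => op (Aob R)) :=
  Fan.mk (op (Bob R n)) (fun i => (sing R n i).op)

noncomputable def powerFanIsLimit (n : ℕ) : IsLimit (powerFan R n) := by
  refine mkFanLimit _ (fun s => (sumM R (fun i => (s.proj i).unop)).op) ?_ ?_
  · intro s i
    show (sumM R (fun i => (s.proj i).unop)).op ≫ (sing R n i).op = s.proj i
    rw [← op_comp, sing_comp_sumM]
    rfl
  · intro s m hm
    change s.pt ⟶ op (Bob R n) at m
    have : m.unop = sumM R (fun i => (s.proj i).unop) := by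
      apply hom_eq_of_toLin
      apply LinearMap.ext
      intro x
      have hx : x = ∑ i, Pi.single i (x i) := (Finset.univ_sum_single x).symm
      conv_lhs => rw [hx]
      rw [map_sum]
      have : ∀ i, toLin m.unop (Pi.single i (x i)) = toLin (s.proj i).unop (x i) := by
        intro i
        have h1 : sing R n i ≫ m.unop = (s.proj i).unop := by
          have := hm i
          have := congrArg Quiver.Hom.unop this
          exact this
        rw [← h1, toLin_comp]
        rfl
      rw [Finset.sum_congr rfl (fun i _ => this i)]
      show _ = toLin (sumM R fun i => (s.proj i).unop) x
      show _ = (∑ i, (toLin (s.proj i).unop).comp (LinearMap.proj i)) x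
      rw [LinearMap.sum_apply]
      rfl
    calc m = (m.unop).op := rfl
    _ = _ := by rw [this]

variable {R}
section Model
variable (G : (FGFree R)ᵒᵖ ⥤ Type u) [PreservesFiniteProducts G]

noncomputable def psi (n : ℕ) (x : G.obj (op (Bob R n))) : Fin n → G.obj (op (Aob R)) :=
  fun i => G.map (sing R n i).op x

lemma psi_bij (n : ℕ) : Function.Bijective (psi G n) := by
  have hl := isLimitOfPreserves G (powerFanIsLimit R n)
  exact discrete_cone_bij hl

noncomputable def psiE (n : ℕ) : G.obj (op (Bob R n)) ≃ (Fin n → G.obj (op (Aob R))) :=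
  Equiv.ofBijective _ (psi_bij G n)

/-- evaluation of `x : G (op N)` at a "generalized element" `g`. -/
def el {N : FGFree R} (x : G.obj (op N)) (g : Aob R ⟶ N) : G.obj (op (Aob R)) :=
  G.map g.op x

lemma el_subst {N : FGFree R} {n : ℕ} (x : G.obj (op N)) (f : Fin n → (Aob R ⟶ N))
    (μ : Aob R ⟶ Bob R n) :
    el G ((psiE G n).symm (fun i => el G x (f i))) μ = el G x (μ ≫ sumM R f) := by
  have key : (psiE G n).symm (fun i => el G x (f i)) = G.map (sumM R f).op x := by
    apply (psiE G n).injective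
    rw [Equiv.apply_symm_apply]
    funext i
    show el G x (f i) = G.map (sing R n i).op (G.map (sumM R f).op x)
    rw [← FunctorToTypes.map_comp_apply, ← op_comp, sing_comp_sumM]
    rfl
  rw [key]
  show G.map μ.op (G.map (sumM R f).op x) = _
  rw [← FunctorToTypes.map_comp_apply, ← op_comp]
  rfl

noncomputable def madd (a b : G.obj (op (Aob R))) : G.obj (op (Aob R)) :=
  el G ((psiE G 2).symm ![a, b]) (sing R 2 0 + sing R 2 1)
noncomputable def mzero : G.obj (op (Aob R)) :=
  el G ((psiE G 0).symm finZeroElim) 0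
noncomputable def mneg (a : G.obj (op (Aob R))) : G.obj (op (Aob R)) :=
  el G ((psiE G 1).symm (fun _ => a)) (-(sing R 1 0))
noncomputable def spanA (r : R) : Aob R ⟶ Aob R := ofLin (LinearMap.toSpanSingleton R R r)

noncomputable def msmul (r : R) (a : G.obj (op (Aob R))) : G.obj (op (Aob R)) :=
  el G ((psiE G 1).symm (fun _ => a)) (spanA r ≫ sing R 1 0)

lemma el_madd {N : FGFree R} (x : G.obj (op N)) (g g' : Aob R ⟶ N) :
    madd G (el G x g) (el G x g') = el G x (g + g') := by
  unfold madd
  have h1 : ![el G x g, el G x g'] = fun i => el G x (![g, g'] i) := by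
    funext i
    fin_cases i <;> rfl
  rw [h1, el_subst]
  congr 1
  rw [Preadditive.add_comp, sing_comp_sumM, sing_comp_sumM]
  show _ = g + g'
  rfl

lemma el_mzero {N : FGFree R} (x : G.obj (op N)) : mzero G = el G x 0 := by
  unfold mzero
  have h1 : (finZeroElim : Fin 0 → G.obj (op (Aob R)))
      = fun i => el G x ((fun j : Fin 0 => (j.elim0 : Aob R ⟶ N)) i) := by
    funext i; exact i.elim0
  rw [h1, el_subst, Limits.zero_comp]

lemma el_mneg {N : FGFree R} (x : G.obj (op N)) (g : Aob R ⟶ N) :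
    mneg G (el G x g) = el G x (-g) := by
  unfold mneg
  have h1 : (fun _ : Fin 1 => el G x g) = fun i => el G x ((fun _ => g) i) := rfl
  rw [h1, el_subst]
  congr 1
  rw [Preadditive.neg_comp, sing_comp_sumM]

lemma el_msmul {N : FGFree R} (r : R) (x : G.obj (op N)) (g : Aob R ⟶ N) :
    msmul G r (el G x g) = el G x (spanA r ≫ g) := by
  unfold msmul
  have h1 : (fun _ : Fin 1 => el G x g) = fun i => el G x ((fun _ => g) i) := rfl
  rw [h1, el_subst]
  congr 1
  rw [Category.assoc, sing_comp_sumM]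

lemma exists_el₁ (a : G.obj (op (Aob R))) :
    ∃ (x : G.obj (op (Bob R 1))) (g : Aob R ⟶ Bob R 1), a = el G x g := by
  refine ⟨(psiE G 1).symm (fun _ => a), sing R 1 0, ?_⟩
  have := (psiE G 1).apply_symm_apply (fun _ => a)
  exact (congrFun this 0).symm

lemma exists_el₂ (a b : G.obj (op (Aob R))) :
    ∃ (x : G.obj (op (Bob R 2))) (g g' : Aob R ⟶ Bob R 2),
      a = el G x g ∧ b = el G x g' := by
  refine ⟨(psiE G 2).symm ![a, b], sing R 2 0, sing R 2 1, ?_, ?_⟩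
  · exact (congrFun ((psiE G 2).apply_symm_apply ![a, b]) 0).symm
  · exact (congrFun ((psiE G 2).apply_symm_apply ![a, b]) 1).symm

lemma exists_el₃ (a b c : G.obj (op (Aob R))) :
    ∃ (x : G.obj (op (Bob R 3))) (g g' g'' : Aob R ⟶ Bob R 3),
      a = el G x g ∧ b = el G x g' ∧ c = el G x g'' := by
  refine ⟨(psiE G 3).symm ![a, b, c], sing R 3 0, sing R 3 1, sing R 3 2, ?_, ?_, ?_⟩
  · exact (congrFun ((psiE G 3).apply_symm_apply ![a, b, c]) 0).symm
  · exact (congrFun ((psiE G 3).apply_symm_apply ![a, b, c]) 1).symm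
  · exact (congrFun ((psiE G 3).apply_symm_apply ![a, b, c]) 2).symm

lemma spanA_one : spanA (R := R) 1 = 𝟙 (Aob R) := by
  have h : LinearMap.toSpanSingleton R R 1 = LinearMap.id := by
    ext x; simp [LinearMap.toSpanSingleton_apply]
  exact congrArg ofLin h

lemma spanA_add (r s : R) : spanA (R := R) (r + s) = spanA r + spanA s := by
  have h : LinearMap.toSpanSingleton R R (r + s)
      = LinearMap.toSpanSingleton R R r + LinearMap.toSpanSingleton R R s := by
    ext x; simp [LinearMap.toSpanSingleton_apply, smul_add]
  exact congrArg ofLin h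

lemma spanA_mul (r s : R) : spanA (R := R) (r * s) = spanA r ≫ spanA s := by
  have h : LinearMap.toSpanSingleton R R (r * s)
      = (LinearMap.toSpanSingleton R R s).comp (LinearMap.toSpanSingleton R R r) := by
    ext x; simp [LinearMap.toSpanSingleton_apply, smul_eq_mul, mul_assoc]
  exact congrArg ofLin h

lemma spanA_zero : spanA (R := R) 0 = 0 := by
  have h : LinearMap.toSpanSingleton R R 0 = 0 := by
    ext x; simp [LinearMap.toSpanSingleton_apply]
  exact congrArg ofLin h

noncomputable instance : Zero (G.obj (op (Aob R))) := ⟨mzero G⟩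
noncomputable instance : Add (G.obj (op (Aob R))) := ⟨madd G⟩
noncomputable instance : Neg (G.obj (op (Aob R))) := ⟨mneg G⟩

noncomputable instance modelAddCommGroup : AddCommGroup (G.obj (op (Aob R))) where
  nsmul := nsmulRec
  zsmul := zsmulRec
  add_assoc a b c := by
    obtain ⟨x, g1, g2, g3, rfl, rfl, rfl⟩ := exists_el₃ G a b c
    show madd G (madd G _ _) _ = madd G _ (madd G _ _)
    rw [el_madd, el_madd, el_madd, el_madd, add_assoc]
  add_comm a b := by
    obtain ⟨x, g1, g2, rfl, rfl⟩ := exists_el₂ G a b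
    show madd G _ _ = madd G _ _
    rw [el_madd, el_madd, add_comm]
  zero_add a := by
    obtain ⟨x, g, rfl⟩ := exists_el₁ G a
    show madd G (mzero G) _ = _
    rw [el_mzero G x, el_madd, zero_add]
  add_zero a := by
    obtain ⟨x, g, rfl⟩ := exists_el₁ G a
    show madd G _ (mzero G) = _
    rw [el_mzero G x, el_madd, add_zero]
  neg_add_cancel a := by
    obtain ⟨x, g, rfl⟩ := exists_el₁ G a
    show madd G (mneg G _) _ = mzero G
    rw [el_mneg, el_madd, neg_add_cancel, ← el_mzero G x]

noncomputable instance modelModule : Module R (G.obj (op (Aob R))) where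
  smul r a := msmul G r a
  one_smul a := by
    obtain ⟨x, g, rfl⟩ := exists_el₁ G a
    show msmul G 1 _ = _
    rw [el_msmul, spanA_one, Category.id_comp]
  mul_smul r s a := by
    obtain ⟨x, g, rfl⟩ := exists_el₁ G a
    show msmul G (r * s) _ = msmul G r (msmul G s _)
    rw [el_msmul, el_msmul, el_msmul, spanA_mul, Category.assoc]
  smul_zero r := by
    obtain ⟨x, g, -⟩ := exists_el₁ G (mzero G)
    show msmul G r (mzero G) = mzero G
    rw [el_mzero G x, el_msmul, Limits.comp_zero, ← el_mzero G x]
  smul_add r a b := by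
    obtain ⟨x, g1, g2, rfl, rfl⟩ := exists_el₂ G a b
    show msmul G r (madd G _ _) = madd G (msmul G r _) (msmul G r _)
    rw [el_madd, el_msmul, el_msmul, el_msmul, Preadditive.comp_add, ← el_madd]
  add_smul r s a := by
    obtain ⟨x, g, rfl⟩ := exists_el₁ G a
    show msmul G (r + s) _ = madd G (msmul G r _) (msmul G s _)
    rw [el_msmul, el_msmul, el_msmul, spanA_add, Preadditive.add_comp, ← el_madd]
  zero_smul a := by
    obtain ⟨x, g, rfl⟩ := exists_el₁ G a
    show msmul G 0 _ = mzero G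
    rw [el_msmul, spanA_zero, Limits.zero_comp, ← el_mzero G x]

lemma toSpanF_add {N : FGFree R} (v w : ↑N.obj) :
    toSpanF R (v + w) = toSpanF R v + toSpanF R w := by
  have h : LinearMap.toSpanSingleton R N.obj (v + w)
      = LinearMap.toSpanSingleton R N.obj v + LinearMap.toSpanSingleton R N.obj w := by
    ext c
    simp [LinearMap.toSpanSingleton_apply, smul_add]
  exact congrArg ofLin h

lemma toSpanF_smul {N : FGFree R} (r : R) (v : ↑N.obj) :
    toSpanF R (r • v) = spanA (R := R) r ≫ toSpanF R v := by
  have h : LinearMap.toSpanSingleton R N.obj (r • v)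
      = (LinearMap.toSpanSingleton R N.obj v).comp (LinearMap.toSpanSingleton R R r) := by
    ext c
    simp [LinearMap.toSpanSingleton_apply, mul_smul, smul_eq_mul]
  exact congrArg ofLin h

noncomputable def Mmod : ModuleCat.{u} R := ModuleCat.of R (G.obj (op (Aob R)))

noncomputable def phiApp (N : FGFree R) (x : G.obj (op N)) : ↑N.obj →ₗ[R] ↑(Mmod G) where
  toFun v := el G x (toSpanF R v)
  map_add' v w := by
    show el G x (toSpanF R (v + w)) = madd G (el G x (toSpanF R v)) (el G x (toSpanF R w))
    rw [toSpanF_add, ← el_madd]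
  map_smul' r v := by
    show el G x (toSpanF R (r • v)) = msmul G r (el G x (toSpanF R v))
    rw [toSpanF_smul, ← el_msmul]

noncomputable def phiNat : G ⟶ (restrictedYoneda R).obj (Mmod G) where
  app X := TypeCat.ofHom (fun x => ModuleCat.ofHom (phiApp G (unop X) x))
  naturality X Y f := by
    refine ConcreteCategory.hom_ext _ _ (fun x => ?_)
    apply ModuleCat.hom_ext
    apply LinearMap.ext
    intro v
    show el G (G.map f x) (toSpanF R v) = el G x (toSpanF R (toLin f.unop v))
    rw [← toSpanF_comp]
    show G.map (toSpanF R v).op (G.map f x) = G.map (toSpanF R v ≫ f.unop).op x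
    rw [← FunctorToTypes.map_comp_apply]
    rfl

lemma evalSingle_bij (n : ℕ) (W : Type u) [AddCommGroup W] [Module R W] :
    Function.Bijective (fun (h : (Fin n → R) →ₗ[R] W) (i : Fin n) => h (Pi.single i 1)) := by
  constructor
  · intro h h' hh
    apply LinearMap.ext
    intro x
    have hx : x = ∑ i, Pi.single i (x i) := (Finset.univ_sum_single x).symm
    have e1 : ∀ (k : (Fin n → R) →ₗ[R] W), k x = ∑ i, x i • k (Pi.single i 1) := by
      intro k
      conv_lhs => rw [hx]
      rw [map_sum]
      refine Finset.sum_congr rfl (fun i _ => ?_)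
      rw [← map_smul]
      congr 1
      funext j
      by_cases hj : j = i <;> simp [Pi.single_apply, hj]
    have hh' : ∀ i, h (Pi.single i 1) = h' (Pi.single i 1) := fun i => congrFun hh i
    rw [e1 h, e1 h']
    exact Finset.sum_congr rfl (fun i _ => by rw [hh' i])
  · intro v
    refine ⟨{ toFun := fun x => ∑ i, x i • v i
              map_add' := by intro x y; simp [add_smul, Finset.sum_add_distrib]
              map_smul' := by intro c x; simp [mul_smul, Finset.smul_sum] }, ?_⟩
    funext i
    simp only [LinearMap.coe_mk, AddHom.coe_mk]
    rw [Finset.sum_eq_single i (fun b _ hb => by simp [Pi.single_apply, hb]) (by simp)]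
    simp

lemma toSpanF_single (n : ℕ) (i : Fin n) :
    toSpanF R (show ↑(Bob R n).obj from Pi.single i 1) = sing R n i := by
  have h : LinearMap.toSpanSingleton R (Fin n → R) (Pi.single i 1)
      = LinearMap.single R (fun _ : Fin n => R) i := by
    ext c
    simp [LinearMap.toSpanSingleton_apply]
  exact congrArg ofLin h

lemma phiApp_bij_B (n : ℕ) : Function.Bijective (phiApp G (Bob R n)) := by
  have hcomp : (fun (h : (Fin n → R) →ₗ[R] ↑(Mmod G)) (i : Fin n) => h (Pi.single i 1))
      ∘ (phiApp G (Bob R n)) = psi G n := by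
    funext x i
    show el G x (toSpanF R (show ↑(Bob R n).obj from Pi.single i 1)) = psi G n x i
    rw [toSpanF_single]
    rfl
  have h2 : Function.Bijective ((fun (h : (Fin n → R) →ₗ[R] ↑(Mmod G)) (i : Fin n) =>
      h (Pi.single i 1)) ∘ (phiApp G (Bob R n))) := by
    rw [hcomp]; exact psi_bij G n
  exact ((Function.Bijective.of_comp_iff' (evalSingle_bij (R := R) n _) _).mp h2)

lemma phiNat_app_bij (X : (FGFree R)ᵒᵖ) : Function.Bijective ((phiNat G).app X) := by
  obtain ⟨n, ⟨e⟩⟩ := (unop X).property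
  let e' : unop X ≅ Bob R n := InducedCategory.isoMk e
  let f : op (Bob R n) ⟶ X := e'.hom.op
  have hnat := (phiNat G).naturality f
  have h1 : ((phiNat G).app X) ∘ (G.map f)
      = (((restrictedYoneda R).obj (Mmod G)).map f) ∘ ((phiNat G).app (op (Bob R n))) := by
    funext x
    exact types_congr_hom hnat x
  have hGf : Function.Bijective (G.map f) := (G.mapIso e'.op).toEquiv.bijective
  have hHf : Function.Bijective (((restrictedYoneda R).obj (Mmod G)).map f) :=
    (((restrictedYoneda R).obj (Mmod G)).mapIso e'.op).toEquiv.bijective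
  have h2 : Function.Bijective (((phiNat G).app X) ∘ (G.map f)) := by
    rw [h1]
    exact hHf.comp ((ModuleCat.homEquiv.symm.bijective).comp (phiApp_bij_B G n))
  exact (Function.Bijective.of_comp_iff _ hGf).mp h2

end Model

section Forward
variable (R)

lemma isFGFree_of (P : ModuleCat.{u} R) [Module.Finite R P] [Module.Free R P] :
    IsFGFree R P := by
  let ι := Module.Free.ChooseBasisIndex R P
  let b : Module.Basis ι R P := Module.Free.chooseBasis R P
  let n := Fintype.card ι
  let e1 : P ≃ₗ[R] (ι → R) := b.equivFun
  let e2 : (ι → R) ≃ₗ[R] (Fin n → R) := LinearEquiv.funCongrLeft R R ((Fintype.equivFin ι).symm)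
  exact ⟨n, ⟨(e1.trans e2).toModuleIso⟩⟩

lemma fgfree_free (N : FGFree R) : Module.Free R ↑N.obj := by
  obtain ⟨n, ⟨e⟩⟩ := N.property
  haveI : Module.Free R ↑(ModuleCat.of R (Fin n → R)) :=
    inferInstanceAs (Module.Free R (Fin n → R))
  exact Module.Free.of_equiv e.toLinearEquiv.symm

lemma fgfree_finite (N : FGFree R) : Module.Finite R ↑N.obj := by
  obtain ⟨n, ⟨e⟩⟩ := N.property
  haveI : Module.Finite R ↑(ModuleCat.of R (Fin n → R)) :=
    inferInstanceAs (Module.Finite R (Fin n → R))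
  exact Module.Finite.equiv e.toLinearEquiv.symm

variable {R} in
noncomputable def piDesc {J : Type} [Fintype J] {W : J → Type u} [∀ j, AddCommGroup (W j)]
    [∀ j, Module R (W j)] {P : Type u} [AddCommGroup P] [Module R P]
    (k : ∀ j, W j →ₗ[R] P) : (∀ j, W j) →ₗ[R] P where
  toFun x := ∑ j, k j (x j)
  map_add' x y := by simp [map_add, Finset.sum_add_distrib]
  map_smul' c x := by simp [map_smul, Finset.smul_sum]

variable {R} in
lemma pi_single_sum {J : Type} [Fintype J] [DecidableEq J] {W : J → Type u}
    [∀ j, AddCommGroup (W j)] [∀ j, Module R (W j)] {P : Type u} [AddCommGroup P] [Module R P]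
    (k : ∀ j, W j →ₗ[R] P) (j : J) (v : W j) :
    piDesc k (Pi.single j v) = k j v := by
  show (∑ j', k j' (Pi.single j v j')) = k j v
  rw [Finset.sum_eq_single j (fun b _ hb => by rw [Pi.single_eq_of_ne hb, map_zero]) (by simp)]
  rw [Pi.single_eq_same]

variable {R} in
lemma piDesc_uniq {J : Type} [Fintype J] [DecidableEq J] {W : J → Type u}
    [∀ j, AddCommGroup (W j)] [∀ j, Module R (W j)] {P : Type u} [AddCommGroup P] [Module R P]
    (k : ∀ j, W j →ₗ[R] P) (m : (∀ j, W j) →ₗ[R] P)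
    (h : ∀ j v, m (Pi.single j v) = k j v) : m = piDesc k := by
  apply LinearMap.ext
  intro x
  have hx : x = ∑ j, Pi.single j (x j) := (Finset.univ_sum_single x).symm
  conv_lhs => rw [hx]
  rw [map_sum]
  show _ = ∑ j, k j (x j)
  exact Finset.sum_congr rfl (fun j _ => h j (x j))

lemma preservesColimit_inc {J : Type} [Fintype J] (f : J → FGFree R) :
    PreservesColimit (Discrete.functor f) (ObjectProperty.ι (IsFGFree R)) := by
  classical
  haveI h1 : ∀ j, Module.Free R ↑(f j).obj := fun j => fgfree_free R (f j)
  haveI h2 : ∀ j, Module.Finite R ↑(f j).obj := fun j => fgfree_finite R (f j)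
  haveI : Module.Finite R ↑(ModuleCat.of R (∀ j, ↑(f j).obj)) :=
    inferInstanceAs (Module.Finite R (∀ j, ↑(f j).obj))
  haveI : Module.Free R ↑(ModuleCat.of R (∀ j, ↑(f j).obj)) :=
    inferInstanceAs (Module.Free R (∀ j, ↑(f j).obj))
  have hpt : IsFGFree R (ModuleCat.of R (∀ j, ↑(f j).obj)) := isFGFree_of R _
  let pt : FGFree R := ⟨ModuleCat.of R (∀ j, ↑(f j).obj), hpt⟩
  let c : Cocone (Discrete.functor f) :=
    Cofan.mk pt (fun j => (show f j ⟶ pt from InducedCategory.homMk (ModuleCat.ofHom (LinearMap.single R (fun j => ↑(f j).obj) j))))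
  have hmap : IsColimit ((ObjectProperty.ι (IsFGFree R)).mapCocone c) := by
    refine { desc := fun s => (ModuleCat.ofHom (piDesc (fun j => (s.ι.app ⟨j⟩).hom)) :
        ModuleCat.of R (∀ j, ↑(f j).obj) ⟶ s.pt), fac := ?_, uniq := ?_ }
    · rintro s ⟨j⟩
      apply ModuleCat.hom_ext
      apply LinearMap.ext
      intro v
      exact pi_single_sum (R := R) (W := fun j => ↑(f j).obj) (P := ↑s.pt)
        (fun j => (s.ι.app ⟨j⟩).hom) j v
    · intro s m hm
      exact ModuleCat.hom_ext (piDesc_uniq (R := R) (W := fun j => ↑(f j).obj) (P := ↑s.pt) _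
        m.hom
        (fun j v => LinearMap.congr_fun (congrArg ModuleCat.Hom.hom (hm ⟨j⟩)) v))
  have hc : IsColimit c := isColimitOfReflects (ObjectProperty.ι (IsFGFree R)) hmap
  exact preservesColimit_of_preserves_colimit_cocone hc hmap

lemma preservesFP_res (M : ModuleCat.{u} R) :
    PreservesFiniteProducts ((restrictedYoneda R).obj M) := by
  constructor
  intro n
  haveI : ∀ (f : Fin n → FGFree R),
      PreservesColimit (Discrete.functor f) (ObjectProperty.ι (IsFGFree R)) :=
    preservesColimit_inc R
  haveI : PreservesColimitsOfShape (Discrete (Fin n)) (ObjectProperty.ι (IsFGFree R)) :=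
    ⟨fun {K} => preservesColimit_of_iso_diagram _ (Discrete.natIsoFunctor (F := K)).symm⟩
  haveI : PreservesColimitsOfShape (Discrete (Fin n))ᵒᵖ (ObjectProperty.ι (IsFGFree R)) :=
    preservesColimitsOfShape_of_equiv (Discrete.opposite (Fin n)).symm _
  haveI : PreservesLimitsOfShape (Discrete (Fin n)) (ObjectProperty.ι (IsFGFree R)).op :=
    preservesLimitsOfShape_op _ _
  exact inferInstanceAs (PreservesLimitsOfShape (Discrete (Fin n))
    ((ObjectProperty.ι (IsFGFree R)).op ⋙ yoneda.obj M))

end Forward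

section FF

def appLin {P Q : ModuleCat.{u} R} (k : P ⟶ Q) : ↑P →ₗ[R] ↑Q := k.hom
def ofLinC {P Q : ModuleCat.{u} R} (k : ↑P →ₗ[R] ↑Q) : P ⟶ Q := ModuleCat.ofHom k

lemma appLin_comp {P Q S : ModuleCat.{u} R} (f : P ⟶ Q) (g : Q ⟶ S) :
    appLin (f ≫ g) = (appLin g).comp (appLin f) := rfl

def toSpanC {P : ModuleCat.{u} R} (v : ↑P) : (Aob R).obj ⟶ P :=
  ofLinC (LinearMap.toSpanSingleton R P v)

lemma eta_nat {M M' : ModuleCat.{u} R}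
    (η : (restrictedYoneda R).obj M ⟶ (restrictedYoneda R).obj M')
    {N N' : FGFree R} (w : N' ⟶ N) (h : N.obj ⟶ M) :
    η.app (op N') ((w.hom ≫ h : N'.obj ⟶ M)) =
      (w.hom ≫ η.app (op N) h : N'.obj ⟶ M') :=
  types_congr_hom (η.naturality w.op) h

lemma toSpanC_comp {P P' : ModuleCat.{u} R} (v : ↑P) (h : P ⟶ P') :
    (toSpanC v ≫ h : (Aob R).obj ⟶ P') = toSpanC (appLin h v) := by
  have : (appLin h).comp (LinearMap.toSpanSingleton R P v)
      = LinearMap.toSpanSingleton R P' (appLin h v) := by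
    ext c
    simp [LinearMap.toSpanSingleton_apply]
  exact congrArg ofLinC this

lemma toSpanC_spanA {P : ModuleCat.{u} R} (r : R) (v : ↑P) :
    toSpanC (r • v) = ((spanA (R := R) r).hom ≫ toSpanC v : (Aob R).obj ⟶ P) := by
  have : LinearMap.toSpanSingleton R P (r • v)
      = (LinearMap.toSpanSingleton R P v).comp (LinearMap.toSpanSingleton R R r) := by
    ext c
    simp [LinearMap.toSpanSingleton_apply, mul_smul, smul_eq_mul]
  exact congrArg ofLinC this

noncomputable def sumC {n : ℕ} {P : ModuleCat.{u} R} (g : Fin n → ((Aob R).obj ⟶ P)) :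
    (Bob R n).obj ⟶ P :=
  ofLinC (∑ i, (appLin (g i)).comp (LinearMap.proj i))

lemma sing_comp_sumC {n : ℕ} {P : ModuleCat.{u} R} (g : Fin n → ((Aob R).obj ⟶ P)) (i : Fin n) :
    ((sing R n i).hom ≫ sumC g : (Aob R).obj ⟶ P) = g i := by
  have : (∑ j, (appLin (g j)).comp (LinearMap.proj j)).comp
      (LinearMap.single R (fun _ : Fin n => R) i) = appLin (g i) := by
    apply LinearMap.ext
    intro (r : R)
    show (∑ j, (appLin (g j)).comp (LinearMap.proj j)) (Pi.single i r) = appLin (g i) r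
    rw [LinearMap.sum_apply]
    simp only [LinearMap.comp_apply, LinearMap.proj_apply, Pi.single_apply]
    rw [Finset.sum_eq_single i (fun b _ hb => by simp [hb]) (by simp)]
    simp
  exact congrArg ofLinC this

lemma toSpanC_add {M : ModuleCat.{u} R} (m m' : ↑M) :
    toSpanC (m + m') = ((sing R 2 0 + sing R 2 1).hom ≫ sumC ![toSpanC m, toSpanC m']
      : (Aob R).obj ⟶ M) := by
  have h0 : ((sing R 2 0).hom ≫ sumC ![toSpanC m, toSpanC m'] : (Aob R).obj ⟶ M)
      = toSpanC m := sing_comp_sumC ![toSpanC m, toSpanC m'] 0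
  have h1 : ((sing R 2 1).hom ≫ sumC ![toSpanC m, toSpanC m'] : (Aob R).obj ⟶ M)
      = toSpanC m' := sing_comp_sumC ![toSpanC m, toSpanC m'] 1
  have e : (toLin (sing R 2 0 + sing R 2 1) : _ →ₗ[R] _)
      = (toLin (sing R 2 0) : _ →ₗ[R] _) + toLin (sing R 2 1) := rfl
  have goal : appLin (toSpanC (R := R) (m + m'))
      = appLin ((sing R 2 0 + sing R 2 1).hom ≫ sumC ![toSpanC m, toSpanC m']
        : (Aob R).obj ⟶ M) := by
    apply LinearMap.ext
    intro (c : R)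
    have lhs : appLin (toSpanC (R := R) (m + m')) c = (c : R) • (m + m') := rfl
    have rhs : appLin ((sing R 2 0 + sing R 2 1).hom ≫ sumC ![toSpanC m, toSpanC m']
        : (Aob R).obj ⟶ M) c
        = appLin ((sing R 2 0).hom ≫ sumC ![toSpanC m, toSpanC m'] : (Aob R).obj ⟶ M) c
          + appLin ((sing R 2 1).hom ≫ sumC ![toSpanC m, toSpanC m'] : (Aob R).obj ⟶ M) c := by
      show (appLin (sumC ![toSpanC m, toSpanC m'])) ((toLin (sing R 2 0 + sing R 2 1) : _ →ₗ[R] _) c) = _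
      rw [e]
      show (appLin (sumC ![toSpanC m, toSpanC m']))
        ((toLin (sing R 2 0) : _ →ₗ[R] _) c + (toLin (sing R 2 1) : _ →ₗ[R] _) c) = _
      rw [map_add]
      rfl
    rw [lhs, rhs, h0, h1]
    show (c : R) • (m + m') = appLin (toSpanC m) c + appLin (toSpanC m') c
    have : appLin (toSpanC (R := R) m) c = (c : R) • m := rfl
    rw [this]
    have : appLin (toSpanC (R := R) m') c = (c : R) • m' := rfl
    rw [this]
    obtain ⟨c2, hc2⟩ : ∃ c2 : R, c2 = c := ⟨c, rfl⟩
    rw [← hc2]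
    exact smul_add c2 m m'
  exact ModuleCat.hom_ext goal

noncomputable def fullLift {M M' : ModuleCat.{u} R}
    (η : (restrictedYoneda R).obj M ⟶ (restrictedYoneda R).obj M') : M ⟶ M' :=
  ofLinC
  { toFun := fun m => appLin (η.app (op (Aob R)) (toSpanC m)) (1 : R)
    map_add' := fun m m' => by
      show appLin (η.app (op (Aob R)) (toSpanC (m + m'))) (1 : R)
        = appLin (η.app (op (Aob R)) (toSpanC m)) (1 : R)
          + appLin (η.app (op (Aob R)) (toSpanC m')) (1 : R)
      have h0 : ((sing R 2 0).hom ≫ sumC ![toSpanC m, toSpanC m'] : (Aob R).obj ⟶ M)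
          = toSpanC m := sing_comp_sumC ![toSpanC m, toSpanC m'] 0
      have h1 : ((sing R 2 1).hom ≫ sumC ![toSpanC m, toSpanC m'] : (Aob R).obj ⟶ M)
          = toSpanC m' := sing_comp_sumC ![toSpanC m, toSpanC m'] 1
      have key : η.app (op (Aob R)) (toSpanC (m + m'))
          = ((sing R 2 0 + sing R 2 1).hom
              ≫ η.app (op (Bob R 2)) (sumC ![toSpanC m, toSpanC m']) : _ ⟶ M') := by
        rw [toSpanC_add m m']
        exact eta_nat η (sing R 2 0 + sing R 2 1) (sumC ![toSpanC m, toSpanC m'])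
      have k0 : η.app (op (Aob R)) (toSpanC m)
          = ((sing R 2 0).hom
              ≫ η.app (op (Bob R 2)) (sumC ![toSpanC m, toSpanC m']) : _ ⟶ M') := by
        conv_lhs => rw [← h0]
        exact eta_nat η (sing R 2 0) (sumC ![toSpanC m, toSpanC m'])
      have k1 : η.app (op (Aob R)) (toSpanC m')
          = ((sing R 2 1).hom
              ≫ η.app (op (Bob R 2)) (sumC ![toSpanC m, toSpanC m']) : _ ⟶ M') := by
        conv_lhs => rw [← h1]
        exact eta_nat η (sing R 2 1) (sumC ![toSpanC m, toSpanC m'])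
      rw [key, k0, k1]
      set k := η.app (op (Bob R 2)) (sumC ![toSpanC m, toSpanC m']) with hk
      show appLin k ((toLin (sing R 2 0 + sing R 2 1) : _ →ₗ[R] _) (1 : R))
        = appLin k ((toLin (sing R 2 0) : _ →ₗ[R] _) (1 : R))
          + appLin k ((toLin (sing R 2 1) : _ →ₗ[R] _) (1 : R))
      have e : (toLin (sing R 2 0 + sing R 2 1) : _ →ₗ[R] _) (1 : R)
          = (toLin (sing R 2 0) : _ →ₗ[R] _) (1 : R)
            + (toLin (sing R 2 1) : _ →ₗ[R] _) (1 : R) := rfl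
      rw [e, map_add]
    map_smul' := fun r m => by
      show appLin (η.app (op (Aob R)) (toSpanC (r • m))) (1 : R)
        = r • appLin (η.app (op (Aob R)) (toSpanC m)) (1 : R)
      rw [toSpanC_spanA r m, eta_nat η (spanA (R := R) r) (toSpanC m)]
      set k := η.app (op (Aob R)) (toSpanC m) with hk
      show appLin k ((toLin (spanA (R := R) r) : _ →ₗ[R] _) (1 : R)) = r • appLin k (1 : R)
      have e : (toLin (spanA (R := R) r) : _ →ₗ[R] _) (1 : R) = r • (1 : R) := by
        show (1 : R) • r = r • (1 : R)
        rw [smul_eq_mul, smul_eq_mul, one_mul, mul_one]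
      rw [e]; exact (appLin k).map_smul r (1 : R) }

lemma fullLift_spec {M M' : ModuleCat.{u} R}
    (η : (restrictedYoneda R).obj M ⟶ (restrictedYoneda R).obj M') :
    (restrictedYoneda R).map (fullLift η) = η := by
  apply NatTrans.ext
  funext X
  refine ConcreteCategory.hom_ext _ _ (fun h => ?_)
  show (h ≫ fullLift η : (unop X).obj ⟶ M') = η.app X h
  apply ModuleCat.hom_ext
  apply LinearMap.ext
  intro v
  show appLin (η.app (op (Aob R)) (toSpanC (appLin (h : (unop X).obj ⟶ M) v))) (1 : R)
    = appLin (η.app X h) v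
  have e1 : toSpanC (appLin (h : (unop X).obj ⟶ M) v)
      = ((toSpanF R v).hom ≫ (h : (unop X).obj ⟶ M) : (Aob R).obj ⟶ M) :=
    (toSpanC_comp v (h : (unop X).obj ⟶ M)).symm
  rw [show appLin (η.app (op (Aob R)) (toSpanC (appLin (h : (unop X).obj ⟶ M) v))) (1 : R)
      = appLin (η.app (op (Aob R))
          (((toSpanF R v).hom ≫ (h : (unop X).obj ⟶ M) : (Aob R).obj ⟶ M))) (1 : R) from
    congrArg (fun k => appLin (η.app (op (Aob R)) k) (1 : R)) e1]
  rw [eta_nat η (toSpanF R v) (h : (unop X).obj ⟶ M)]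
  show appLin (η.app (op (unop X)) h) ((1 : R) • v) = appLin (η.app X h) v
  rw [one_smul]

lemma faithful_aux {M M' : ModuleCat.{u} R} (f g : M ⟶ M')
    (h : (restrictedYoneda R).map f = (restrictedYoneda R).map g) : f = g := by
  apply ModuleCat.hom_ext
  apply LinearMap.ext
  intro m
  have h1 := types_congr_hom (congrArg (fun η => η.app (op (Aob R))) h) (toSpanC m)
  have h2 : (toSpanC m ≫ f : (Aob R).obj ⟶ M') = (toSpanC m ≫ g : (Aob R).obj ⟶ M') := h1
  have h3 := LinearMap.congr_fun (congrArg appLin h2) (1 : R)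
  show appLin f m = appLin g m
  have e : ∀ (k : M ⟶ M'), appLin (toSpanC m ≫ k) (1 : R) = appLin k m := by
    intro k
    show appLin k ((1 : R) • m) = appLin k m
    rw [one_smul]
  rw [← e f, ← e g]
  exact h3

end FF

end Test

/-- `ModuleCat R` is equivalent to the category of models of the Lawvere theory of finitely
generated free `R`-modules: the restricted Yoneda functor is fully faithful, with essential
image exactly the finite-product-preserving functors `(FGFree R)ᵒᵖ ⥤ Type`. -/
theorem restrictedYoneda_fullyFaithful_essImage_models :
    (restrictedYoneda R).Full ∧ (restrictedYoneda R).Faithful ∧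
      ∀ G : (FGFree R)ᵒᵖ ⥤ Type u,
        (restrictedYoneda R).essImage G ↔ PreservesFiniteProducts G := by
  refine ⟨{ map_surjective := fun η => ⟨Test.fullLift η, Test.fullLift_spec η⟩ },
    { map_injective := fun {M M'} {f g} h => Test.faithful_aux f g h },
    fun G => ⟨?_, ?_⟩⟩
  · rintro ⟨M, ⟨i⟩⟩
    have hM := Test.preservesFP_res R M
    exact ⟨fun J => by
      haveI := hM.preserves J
      exact preservesLimitsOfShape_of_natIso i⟩
  · intro hG
    haveI := hG
    haveI : ∀ X, IsIso ((Test.phiNat G).app X) :=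
      fun X => (isIso_iff_bijective _).mpr (Test.phiNat_app_bij G X)
    haveI : IsIso (Test.phiNat G) := NatIso.isIso_of_isIso_app _
    exact ⟨Test.Mmod G, ⟨(asIso (Test.phiNat G)).symm⟩⟩
end

section
/- Let C be a preadditive category with finite biproducts and let X be an object of C such that every object of C is isomorphic to a finite biproduct X^{⊕n} of copies of X (for some n : ℕ). Let R be the endomorphism ring of X, with underlying set Hom_C(X, X), addition the preadditive addition, and multiplication r * s := r ≫ s (composition in diagrammatic order). Then the functor C ⥤ ModuleCat R sending Y to Hom_C(X, Y), regarded as a left R-module via r • h := r ≫ h, is fully faithful, and its essential image is the full subcategory of finitely generated free R-modules (modules isomorphic to Fin n → R). In particular C is equivalent to the category of finitely generated free R-modules. -/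
open CategoryTheory CategoryTheory.Limits Opposite

universe v u

/-- The left action of `End X` (for `X : Cᵒᵖ`) on `unop X ⟶ Y` by `r • f = r.unop ≫ f`
(the instance `CategoryTheory.End.mulActionLeft` of the older Mathlib). -/
instance endMulActionLeftOld {C : Type u} [Category.{v} C] {X : Cᵒᵖ} {Y : C} :
    MulAction (End X) (unop X ⟶ Y) where
  smul r f := r.unop ≫ f
  one_smul := Category.id_comp
  mul_smul _ _ _ := Category.assoc _ _ _

/-- The `End X`-module structure on `unop X ⟶ Y` (the instance
`CategoryTheory.Preadditive.moduleEndLeft` of the older Mathlib). -/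
instance preadditiveModuleEndLeftOld {C : Type u} [Category.{v} C] [Preadditive C]
    {X : Cᵒᵖ} {Y : C} : Module (End X) (unop X ⟶ Y) where
  smul_add _ _ _ := Preadditive.comp_add _ _ _ _ _ _
  smul_zero _ := Limits.comp_zero
  add_smul _ _ _ := Preadditive.add_comp _ _ _ _ _ _
  zero_smul _ := Limits.zero_comp

/-- The functor `preadditiveCoyonedaObj` of the older Mathlib: for `X : Cᵒᵖ`, it sends `Y` to the
`End X`-module `unop X ⟶ Y`. -/
def preadditiveCoyonedaObjOld {C : Type u} [Category.{v} C] [Preadditive C] (X : Cᵒᵖ) :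
    C ⥤ ModuleCat.{v} (End X) where
  obj Y := ModuleCat.of _ (unop X ⟶ Y)
  map f := ModuleCat.ofHom
    { toFun := fun g => g ≫ f
      map_add' := fun _ _ => Preadditive.add_comp _ _ _ _ _ _
      map_smul' := fun _ _ => Category.assoc _ _ _ }

/-- Let `C` be a preadditive category with finite biproducts, generated under finite biproducts
by a single object `unop X` (for `X : Cᵒᵖ`).  Let `R := End X` be the endomorphism ring of this
object, with underlying additive group `Hom_C(unop X, unop X)` and multiplication
`r * s = r ≫ s` (composition in diagrammatic order, as recorded by the first conjunct below).
Then the hom-functor `Y ↦ Hom_C(unop X, Y)`, with left `R`-module structure `r • h = r ≫ h`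
(second conjunct), is fully faithful, and its essential image is exactly the finitely generated
free `R`-modules; in particular `C` is equivalent to the category of finitely generated free
`R`-modules. -/
theorem preadditiveCoyoneda_fullyFaithful_essImage_fgFree
    (C : Type u) [Category.{v} C] [Preadditive C] [HasFiniteBiproducts C] (X : Cᵒᵖ)
    (hgen : ∀ Y : C, ∃ n : ℕ, Nonempty (Y ≅ ⨁ fun _ : Fin n => unop X)) :
    (∀ r s : End X, (r * s).unop = r.unop ≫ s.unop) ∧
    (∀ (Y : C) (r : End X) (h : unop X ⟶ Y), r • h = r.unop ≫ h) ∧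
    (preadditiveCoyonedaObjOld X).Full ∧ (preadditiveCoyonedaObjOld X).Faithful ∧
    ∀ M : ModuleCat.{v} (End X),
      (preadditiveCoyonedaObjOld X).essImage M ↔
        ∃ n : ℕ, Nonempty (M ≅ ModuleCat.of (End X) (Fin n → End X)) := by
  classical
  set F := preadditiveCoyonedaObjOld X with hF
  haveI : F.Additive := ⟨fun {_ _ f g} =>
    ModuleCat.hom_ext (LinearMap.ext fun h => Preadditive.comp_add _ _ _ _ _ _)⟩
  -- linear equivalence between the "generator" module and the ring itself
  have e0 : (unop X ⟶ unop X) ≃ₗ[End X] End X :=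
    { toFun := fun f => f.op
      invFun := fun r => r.unop
      left_inv := fun f => rfl
      right_inv := fun r => rfl
      map_add' := fun f g => rfl
      map_smul' := fun r f => rfl }
  refine ⟨fun r s => rfl, fun Y r h => rfl, ?_, ?_, ?_⟩
  · -- Full
    constructor
    intro Y Z φ
    obtain ⟨n, ⟨e⟩⟩ := hgen Y
    set c : ∀ _ : Fin n, unop X ⟶ Z := fun i => φ.hom (biproduct.ι (fun _ : Fin n => unop X) i ≫ e.inv)
      with hc
    refine ⟨e.hom ≫ biproduct.desc c, ?_⟩
    refine ModuleCat.hom_ext (LinearMap.ext fun (h : unop X ⟶ Y) => ?_)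
    show h ≫ (e.hom ≫ biproduct.desc c) = φ.hom h
    have key : ∀ (m : unop X ⟶ unop X) (k : unop X ⟶ Y), φ.hom (m ≫ k) = m ≫ φ.hom k := by
      intro m k
      let r : End X := Quiver.Hom.op m
      have h2 := map_smul φ.hom r k
      exact h2
    have hh : h = ∑ j : Fin n,
        (h ≫ e.hom ≫ biproduct.π (fun _ : Fin n => unop X) j) ≫
          (biproduct.ι (fun _ : Fin n => unop X) j ≫ e.inv) := by
      calc h = h ≫ e.hom ≫ (𝟙 _) ≫ e.inv := by simp
        _ = h ≫ e.hom ≫ (∑ j : Fin n, biproduct.π (fun _ : Fin n => unop X) j ≫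
              biproduct.ι (fun _ : Fin n => unop X) j) ≫ e.inv := by rw [biproduct.total]
        _ = _ := by simp only [Preadditive.sum_comp, Preadditive.comp_sum, Category.assoc]
    conv_rhs => rw [hh]
    erw [map_sum]
    simp only [key]
    conv_lhs => rw [hh]
    simp only [Preadditive.sum_comp, Category.assoc, Iso.inv_hom_id_assoc, biproduct.ι_desc, hc]
    exact Finset.sum_congr rfl fun j _ =>
      ((congrArg (fun t => h ≫ e.hom ≫ biproduct.π (fun _ : Fin n => unop X) j ≫ t)
        (biproduct.ι_desc _ j)).trans
        (congrArg (fun t => h ≫ t) (Category.assoc _ _ _).symm)).trans (Category.assoc _ _ _).symm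
  · -- Faithful
    constructor
    intro Y Z f g hfg
    obtain ⟨n, ⟨e⟩⟩ := hgen Y
    rw [← cancel_epi e.inv]
    apply biproduct.hom_ext'
    intro j
    have h1 := LinearMap.congr_fun (congrArg ModuleCat.Hom.hom hfg) (biproduct.ι (fun _ : Fin n => unop X) j ≫ e.inv)
    have h2 : (biproduct.ι (fun _ : Fin n => unop X) j ≫ e.inv) ≫ f =
        (biproduct.ι (fun _ : Fin n => unop X) j ≫ e.inv) ≫ g := h1
    simpa using h2
  · -- essential image
    intro M
    constructor
    · rintro ⟨Y, ⟨i⟩⟩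
      obtain ⟨n, ⟨e⟩⟩ := hgen Y
      refine ⟨n, ⟨i.symm ≪≫ F.mapIso e ≪≫ F.mapBiproduct (fun _ : Fin n => unop X) ≪≫
        ModuleCat.biproductIsoPi _ ≪≫
        (LinearEquiv.piCongrRight fun _ : Fin n => e0).toModuleIso⟩⟩
    · rintro ⟨n, ⟨i⟩⟩
      refine ⟨⨁ fun _ : Fin n => unop X,
        ⟨F.mapBiproduct (fun _ : Fin n => unop X) ≪≫ ModuleCat.biproductIsoPi _ ≪≫
          (LinearEquiv.piCongrRight fun _ : Fin n => e0).toModuleIso ≪≫ i.symm⟩⟩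
end

section
/- Let L be a small category with finite products equipped with a distinguished object 1 such that every object of L is isomorphic to a finite power 1^n (a Lawvere theory). Then the evaluation functor ev₁ : Mdl(L) ⥤ Type, F ↦ F(1), admits a left adjoint (the free-model functor, assigning to a set the free model generated by it). -/
open CategoryTheory CategoryTheory.Limits

universe u

set_option linter.unusedSectionVars false
set_option linter.unusedVariables false

namespace LawvereFree

variable {L : Type u} [SmallCategory L] [HasFiniteProducts L] (one : L)

noncomputable section

variable (X : Type u)

/-- The `S`-th power of the generator. -/
abbrev pow (S : Finset X) : L := ∏ᶜ (fun _ : {x // x ∈ S} => one)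

/-- Restriction map between powers. -/
def restr {S T : Finset X} (h : S ⊆ T) : pow one X T ⟶ pow one X S :=
  Pi.lift fun s => Pi.π (fun _ : {x // x ∈ T} => one) ⟨s.1, h s.2⟩

@[simp] lemma restr_π {S T : Finset X} (h : S ⊆ T) (s : {x // x ∈ S}) :
    restr one X h ≫ Pi.π (fun _ : {x // x ∈ S} => one) s
      = Pi.π (fun _ : {x // x ∈ T} => one) ⟨s.1, h s.2⟩ := by
  simp [restr]

lemma restr_refl {S : Finset X} (h : S ⊆ S) : restr one X h = 𝟙 (pow one X S) := by
  apply Pi.hom_ext; intro s; simp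

lemma restr_trans {S T U : Finset X} (h1 : S ⊆ T) (h2 : T ⊆ U) (h3 : S ⊆ U) :
    restr one X h3 = restr one X h2 ≫ restr one X h1 := by
  apply Pi.hom_ext; intro s; simp

/-- The filtered diagram of corepresentables whose colimit is the free model. -/
def D : Finset X ⥤ (L ⥤ Type u) where
  obj S := coyoneda.obj (Opposite.op (pow one X S))
  map {S T} h := coyoneda.map (restr one X (leOfHom h)).op
  map_id S := by
    rw [restr_refl]; simp
  map_comp {S T U} f g := by
    rw [restr_trans one X (leOfHom f) (leOfHom g), op_comp, coyoneda.map_comp]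

instance : IsDirected (Finset X) (· ≤ ·) :=
  ⟨fun S T => by
    classical
    exact ⟨S ∪ T, Finset.subset_union_left, Finset.subset_union_right⟩⟩

/-- The underlying functor of the free model on `X`. -/
abbrev FreeF : L ⥤ Type u := colimit (D one X)

instance instPresFreeF : PreservesFiniteProducts (FreeF one X) := by
  constructor
  intro n
  haveI : ∀ S : Finset X,
      PreservesLimitsOfShape (Discrete (Fin n)) ((D one X).flip ⋙ (evaluation _ _).obj S) := by
    intro S
    haveI : PreservesLimitsOfShape (Discrete (Fin n)) ((D one X).obj S) :=
      inferInstanceAs (PreservesLimitsOfShape (Discrete (Fin n))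
        (coyoneda.obj (Opposite.op (pow one X S))))
    exact preservesLimitsOfShape_of_natIso (flipCompEvaluation (D one X) S).symm
  haveI : PreservesLimitsOfShape (Discrete (Fin n)) (D one X).flip :=
    preservesLimitsOfShape_of_evaluation _ _ (fun S => inferInstance)
  haveI : PreservesLimitsOfShape (Discrete (Fin n))
      ((D one X).flip ⋙ (colim : (Finset X ⥤ Type u) ⥤ Type u)) := by
    infer_instance
  exact preservesLimitsOfShape_of_natIso (colimitIsoFlipCompColim (D one X)).symm

variable {M : L ⥤ Type u}

section
variable (M)
variable [PreservesFiniteProducts M]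

instance presShape (S : Finset X) : PreservesLimitsOfShape (Discrete {x // x ∈ S}) M := by
  have e := Fintype.equivFin {x // x ∈ S}
  exact preservesLimitsOfShape_of_equiv (Discrete.equivalence e.symm) M

/-- Comparison equivalence `M(one^S) ≃ (S → M one)`. -/
def cmpEquiv (S : Finset X) : M.obj (pow one X S) ≃ ∀ _ : {x // x ∈ S}, M.obj one :=
  (asIso (piComparison M (fun _ : {x // x ∈ S} => one))).toEquiv.trans
    (Types.productIso _).toEquiv

@[simp] lemma cmpEquiv_apply (S : Finset X) (m : M.obj (pow one X S)) (s : {x // x ∈ S}) :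
    cmpEquiv one X M S m s = M.map (Pi.π (fun _ : {x // x ∈ S} => one) s) m := by
  have h1 : cmpEquiv one X M S m s =
      (Types.productIso (fun _ : {x // x ∈ S} => M.obj one)).hom
        (piComparison M (fun _ : {x // x ∈ S} => one) m) s := rfl
  rw [h1, Types.productIso_hom_comp_eval_apply]
  exact ConcreteCategory.congr_hom (piComparison_comp_π M (fun _ : {x // x ∈ S} => one) s) m

lemma cmp_ext {S : Finset X} {a b : M.obj (pow one X S)}
    (h : ∀ s : {x // x ∈ S}, M.map (Pi.π (fun _ : {x // x ∈ S} => one) s) a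
      = M.map (Pi.π (fun _ : {x // x ∈ S} => one) s) b) : a = b := by
  apply (cmpEquiv one X M S).injective
  funext s
  simpa using h s

end

section
variable (M) [PreservesFiniteProducts M]

/-- The element of `M(one^S)` with coordinates `φ`. -/
def mk (φ : X → M.obj one) (S : Finset X) : M.obj (pow one X S) :=
  (cmpEquiv one X M S).symm (fun s => φ s.1)

@[simp] lemma map_π_mk (φ : X → M.obj one) (S : Finset X) (s : {x // x ∈ S}) :
    M.map (Pi.π (fun _ : {x // x ∈ S} => one) s) (mk one X M φ S) = φ s.1 := by
  have := congr_fun ((cmpEquiv one X M S).apply_symm_apply (fun s => φ s.1)) s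
  rw [← this, cmpEquiv_apply]
  rfl

lemma map_restr_mk (φ : X → M.obj one) {S T : Finset X} (h : S ⊆ T) :
    M.map (restr one X h) (mk one X M φ T) = mk one X M φ S := by
  apply cmp_ext one X M
  intro s
  rw [← FunctorToTypes.map_comp_apply, restr_π, map_π_mk, map_π_mk]

/-- The cocone used to build the morphism out of the free model. -/
def cocone (φ : X → M.obj one) : Cocone (D one X) where
  pt := M
  ι :=
    { app := fun S => coyonedaEquiv.symm (mk one X M φ S)
      naturality := fun S T h => by
        ext Y g
        have hg : ((D one X).map h).app Y g = restr one X (leOfHom h) ≫ g := rfl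
        simp only [Functor.const_obj_obj, FunctorToTypes.comp, hg,
          coyonedaEquiv_symm_app_apply, Functor.const_obj_map, types_id_apply]
        change M.map (restr one X (leOfHom h) ≫ g) (mk one X M φ T) = M.map g (mk one X M φ S)
        exact (ConcreteCategory.congr_hom (M.map_comp (restr one X (leOfHom h)) g) (mk one X M φ T)).trans
          (congrArg (fun y => M.map g y) (map_restr_mk one X M φ (leOfHom h))) }

@[simp] lemma cocone_ι_app (φ : X → M.obj one) (S : Finset X) (Y : L)
    (g : pow one X S ⟶ Y) :
    ((cocone one X M φ).ι.app S).app Y g = M.map g (mk one X M φ S) :=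
  coyonedaEquiv_symm_app_apply _ _ _

/-- The morphism from the free model induced by `φ`. -/
def toFree (φ : X → M.obj one) : FreeF one X ⟶ M :=
  colimit.desc (D one X) (cocone one X M φ)

/-- The underlying map associated to a morphism from the free model. -/
def fromHom (f : FreeF one X ⟶ M) : X → M.obj one := fun x =>
  f.app one ((colimit.ι (D one X) ({x} : Finset X)).app one
    (Pi.π (fun _ : {y // y ∈ ({x} : Finset X)} => one) ⟨x, Finset.mem_singleton_self x⟩))

lemma f_app_ι (f : FreeF one X ⟶ M) (S : Finset X) {Y : L} (g : pow one X S ⟶ Y) :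
    f.app Y ((colimit.ι (D one X) S).app Y g)
      = M.map g (f.app _ ((colimit.ι (D one X) S).app (pow one X S) (𝟙 _))) := by
  have h1 : (colimit.ι (D one X) S).app Y g
      = (FreeF one X).map g ((colimit.ι (D one X) S).app (pow one X S) (𝟙 _)) := by
    have := ConcreteCategory.congr_hom ((colimit.ι (D one X) S).naturality g) (𝟙 (pow one X S))
    erw [types_comp_apply, types_comp_apply] at this
    have hD : ((D one X).obj S).map g (𝟙 (pow one X S)) = g := by
      exact Category.id_comp g
    rw [hD] at this
    exact this
  rw [h1, FunctorToTypes.naturality]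

lemma fromHom_toFree (φ : X → M.obj one) : fromHom one X M (toFree one X M φ) = φ := by
  funext x
  have h := ConcreteCategory.congr_hom (congr_app (colimit.ι_desc (cocone one X M φ) ({x} : Finset X)) one)
    (Pi.π (fun _ : {y // y ∈ ({x} : Finset X)} => one) ⟨x, Finset.mem_singleton_self x⟩)
  erw [NatTrans.comp_app, types_comp_apply] at h
  unfold fromHom toFree
  exact h.trans ((cocone_ι_app one X M φ {x} one _).trans (map_π_mk one X M φ {x} ⟨x, _⟩))

lemma toFree_fromHom (f : FreeF one X ⟶ M) : toFree one X M (fromHom one X M f) = f := by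
  apply colimit.hom_ext
  intro S
  erw [toFree, colimit.ι_desc]
  ext Y g
  refine (cocone_ι_app one X M (fromHom one X M f) S Y g).trans (Eq.trans ?_ (f_app_ι one X M f S g).symm)
  have key : f.app (pow one X S) ((colimit.ι (D one X) S).app (pow one X S) (𝟙 _))
      = mk one X M (fromHom one X M f) S := by
    apply cmp_ext one X M
    intro s
    rw [map_π_mk]
    rw [← f_app_ι one X M f S (Pi.π (fun _ : {x // x ∈ S} => one) s)]
    have hsub : ({s.1} : Finset X) ⊆ S := by
      intro y hy
      rw [Finset.mem_singleton] at hy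
      subst hy
      exact s.2
    have w := ConcreteCategory.congr_hom (congr_app (colimit.w (D one X) (homOfLE hsub)) one)
      (Pi.π (fun _ : {y // y ∈ ({s.1} : Finset X)} => one)
        ⟨s.1, Finset.mem_singleton_self s.1⟩)
    erw [NatTrans.comp_app, types_comp_apply] at w
    unfold fromHom
    rw [← w]
    have hD : ((D one X).map (homOfLE hsub)).app one
        (Pi.π (fun _ : {y // y ∈ ({s.1} : Finset X)} => one)
          ⟨s.1, Finset.mem_singleton_self s.1⟩)
        = Pi.π (fun _ : {x // x ∈ S} => one) s := by
      show restr one X hsub ≫ Pi.π (fun _ : {y // y ∈ ({s.1} : Finset X)} => one)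
          ⟨s.1, Finset.mem_singleton_self s.1⟩ = _
      rw [restr_π]
    rw [hD]
  rw [key]

end

end
end LawvereFree

open LawvereFree

/-- Evaluation of models at an object `one` of `L` (the forgetful/underlying-set functor). -/
def evalAtGenerator (L : Type u) [SmallCategory L] (one : L) : Mdl L ⥤ Type u :=
  ObjectProperty.ι _ ⋙ (evaluation L (Type u)).obj one

/-- For a Lawvere theory `L` (a category with finite products in which every object is a finite
power of a distinguished object `one`), the evaluation functor `ev₁ : Mdl L ⥤ Type`,
`F ↦ F(one)`, admits a left adjoint (the free-model functor). -/
theorem evalAtGenerator_isRightAdjoint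
    (L : Type u) [SmallCategory L] [HasFiniteProducts L] (one : L)
    (hgen : ∀ Y : L, ∃ n : ℕ, Nonempty (Y ≅ ∏ᶜ fun _ : Fin n => one)) :
    (evalAtGenerator L one).IsRightAdjoint := by
  letI G := evalAtGenerator L one
  letI Fobj : Type u → Mdl L := fun X => ⟨FreeF one X, instPresFreeF one X⟩
  letI e : ∀ (X : Type u) (M : Mdl L), (Fobj X ⟶ M) ≃ (X ⟶ G.obj M) := fun X M =>
    haveI : PreservesFiniteProducts M.obj := M.property
    { toFun := fun f => TypeCat.ofHom (fromHom one X M.obj f.hom)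
      invFun := fun φ => ObjectProperty.homMk (toFree one X M.obj (fun x => φ x))
      left_inv := fun f => InducedCategory.hom_ext (toFree_fromHom one X M.obj f.hom)
      right_inv := fun φ => by
        ext x
        exact congr_fun (fromHom_toFree one X M.obj (fun x => φ x)) x }
  have he : ∀ (X : Type u) (M M' : Mdl L) (g : M ⟶ M') (h : Fobj X ⟶ M),
      e X M' (h ≫ g) = e X M h ≫ G.map g := by
    intro X M M' g h
    ext x
    rfl
  exact ⟨_, ⟨Adjunction.adjunctionOfEquivLeft e he⟩⟩
end
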